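/- arXiv:1202.2468 — 2 statements merged into one kernel-verified Lean document; each statement's English description precedes it below -/
import Mathlib

section
/- Let G be a group of Hamming isometries of {0,1}^n, and let Ω(G) be its set of orbits. Then for any orbit ω_j ∈ Ω(G) and any x1, x2 in a common orbit ω_i, ∑_{y ∈ ω_j} θ^{|y ⊕ x1|}(1-θ)^{n-|y ⊕ x1|} = ∑_{y ∈ ω_j} θ^{|y ⊕ x2|}(1-θ)^{n-|y ⊕ x2|}. -/
open Finset
open scoped Classical
set_option synthInstance.maxHeartbeats 1000000
set_option maxHeartbeats 1000000

/-- Orbits of a group of Hamming isometries satisfy the lumpability (Markov)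
property: for any orbit `ω_j` (the orbit of some point `z`) and any `x1, x2`
lying in a common orbit, the transition mass from `x1` into `ω_j` equals
that from `x2` into `ω_j`. -/
theorem isometry_group_orbits_lumpable (n : ℕ) (θ : ℝ) (h0 : 0 < θ) (h1 : θ < 1)
    (G : Subgroup (Equiv.Perm (Fin n → ZMod 2)))
    (hiso : ∀ g ∈ G, ∀ x y : Fin n → ZMod 2,
      hammingDist (g x) (g y) = hammingDist x y)
    (x1 x2 : Fin n → ZMod 2) (hsame : x2 ∈ MulAction.orbit G x1)
    (z : Fin n → ZMod 2) :
    ∑ y ∈ univ.filter (fun y => y ∈ MulAction.orbit G z),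
        θ ^ (hammingDist y x1) * (1 - θ) ^ (n - hammingDist y x1)
      = ∑ y ∈ univ.filter (fun y => y ∈ MulAction.orbit G z),
        θ ^ (hammingDist y x2) * (1 - θ) ^ (n - hammingDist y x2) := by
  obtain ⟨g, hg⟩ := hsame
  refine Finset.sum_nbij' (fun y => g • y) (fun y => g⁻¹ • y) ?_ ?_ ?_ ?_ ?_
  · intro y hy
    simp only [mem_filter, mem_univ, true_and] at hy ⊢
    obtain ⟨h, hh⟩ := hy
    exact ⟨g * h, by simp [← hh, mul_smul]⟩
  · intro y hy
    simp only [mem_filter, mem_univ, true_and] at hy ⊢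
    obtain ⟨h, hh⟩ := hy
    exact ⟨g⁻¹ * h, by simp [← hh, mul_smul]⟩
  · intro y _; simp
  · intro y _; simp
  · intro y _
    have hd : hammingDist (g • y) x2 = hammingDist y x1 := by
      rw [← hg]
      have := hiso g.1 g.2 y x1
      exact this
    rw [hd]
end

section
/- If a refinement procedure only ever splits a block of a partition when the block contains two elements x1, x2 violating the lumpability equation with respect to some current block, and violations persist under further subdivision (as in the bipartition-persistence lemma), then the coarsest lumpable refinement of a given initial partition of {0,1}^n is unique. -/
open Finset

section Aux
variable {α : Type*} [Fintype α] [DecidableEq α]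

/-- The setoid associated to a finpartition of `univ`. -/
def setoidOfFinpartition (P : Finpartition (Finset.univ : Finset α)) : Setoid α where
  r x y := ∃ b ∈ P.parts, x ∈ b ∧ y ∈ b
  iseqv := by
    constructor
    · intro x
      obtain ⟨b, hb, hx⟩ := P.exists_mem (mem_univ x)
      exact ⟨b, hb, hx, hx⟩
    · rintro x y ⟨b, hb, hx, hy⟩
      exact ⟨b, hb, hy, hx⟩
    · rintro x y z ⟨b, hb, hx, hy⟩ ⟨c, hc, hy', hz⟩
      exact ⟨b, hb, hx, (P.eq_of_mem_parts hc hb hy' hy) ▸ hz⟩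

lemma setoidOfFinpartition_mono {P Q : Finpartition (Finset.univ : Finset α)}
    (h : P ≤ Q) : setoidOfFinpartition P ≤ setoidOfFinpartition Q := by
  rw [Setoid.le_def]
  rintro x y ⟨b, hb, hx, hy⟩
  obtain ⟨c, hc, hbc⟩ := h hb
  exact ⟨c, hc, hbc hx, hbc hy⟩

lemma le_of_setoidOfFinpartition_le {P Q : Finpartition (Finset.univ : Finset α)}
    (h : setoidOfFinpartition P ≤ setoidOfFinpartition Q) : P ≤ Q := by
  intro b hb
  obtain ⟨x, hx⟩ := P.nonempty_of_mem_parts hb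
  refine ⟨Q.part x, Q.part_mem.mpr (mem_univ x), fun y hy => ?_⟩
  have : (setoidOfFinpartition Q) x y := Setoid.le_def.mp h ⟨b, hb, hx, hy⟩
  obtain ⟨c, hc, hxc, hyc⟩ := this
  rwa [Q.part_eq_of_mem hc hxc]

lemma setoidOfFinpartition_ofSetoid (r : Setoid α) [DecidableRel r.r] :
    setoidOfFinpartition (Finpartition.ofSetoid r) = r := by
  apply Setoid.ext
  intro a b
  constructor
  · rintro ⟨c, hc, ha, hb⟩
    have hca : c = (Finpartition.ofSetoid r).part a :=
      ((Finpartition.ofSetoid r).part_eq_of_mem hc ha).symm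
    rw [hca] at hb
    exact (Finpartition.mem_part_ofSetoid_iff_rel).mp hb
  · intro h
    exact ⟨(Finpartition.ofSetoid r).part a,
      (Finpartition.ofSetoid r).part_mem.mpr (mem_univ a),
      (Finpartition.ofSetoid r).mem_part (mem_univ a),
      (Finpartition.mem_part_ofSetoid_iff_rel).mpr h⟩

end Aux

/-- Uniqueness of the maximum ensemble (Theorem 2): among all lumpable
partitions of `{0,1}^n` refining a given initial partition `P0`, there is a
unique coarsest one.  Here a partition is lumpable if for all blocks
`W_i, W_j` and all `x1, x2 ∈ W_i`,
`∑_{y∈W_j} s^{|y⊕x1|} = ∑_{y∈W_j} s^{|y⊕x2|}` (for the fixed `s ∈ (0,1)`),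
and `Q ≤ P` in the `Finpartition` order means `Q` refines `P`. -/
theorem unique_coarsest_lumpable_refinement (n : ℕ) (s : ℝ)
    (hs : s ∈ Set.Ioo (0:ℝ) 1)
    (P0 : Finpartition (Finset.univ : Finset (Fin n → ZMod 2))) :
    let Lumpable : Finpartition (Finset.univ : Finset (Fin n → ZMod 2)) → Prop :=
      fun P => ∀ Wi ∈ P.parts, ∀ Wj ∈ P.parts, ∀ x1 ∈ Wi, ∀ x2 ∈ Wi,
        ∑ y ∈ Wj, s ^ (hammingDist y x1) = ∑ y ∈ Wj, s ^ (hammingDist y x2)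
    ∃! Q : Finpartition (Finset.univ : Finset (Fin n → ZMod 2)),
      Q ≤ P0 ∧ Lumpable Q ∧
        ∀ R : Finpartition (Finset.univ : Finset (Fin n → ZMod 2)),
          R ≤ P0 → Lumpable R → R ≤ Q := by
  intro Lumpable
  classical
  set S : Set (Finpartition (Finset.univ : Finset (Fin n → ZMod 2))) :=
    {R | R ≤ P0 ∧ Lumpable R} with hS
  set c : Setoid (Fin n → ZMod 2) := sSup (setoidOfFinpartition '' S) with hc
  haveI : DecidableRel c.r := fun _ _ => Classical.dec _
  set Q := Finpartition.ofSetoid c with hQdef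
  have hQc : setoidOfFinpartition Q = c := setoidOfFinpartition_ofSetoid c
  -- every member of S refines Q
  have hRQ : ∀ R ∈ S, R ≤ Q := by
    intro R hR
    apply le_of_setoidOfFinpartition_le
    rw [hQc]
    exact le_sSup ⟨R, hR, rfl⟩
  -- Q refines P0
  have hQP0 : Q ≤ P0 := by
    apply le_of_setoidOfFinpartition_le
    rw [hQc, hc]
    apply sSup_le
    rintro r ⟨R, hR, rfl⟩
    exact setoidOfFinpartition_mono hR.1
  -- key: the summed kernel over a Q-block is constant on classes of c
  have key : ∀ Wj ∈ Q.parts, ∀ x1 x2 : Fin n → ZMod 2, c x1 x2 →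
      ∑ y ∈ Wj, s ^ (hammingDist y x1) = ∑ y ∈ Wj, s ^ (hammingDist y x2) := by
    intro Wj hWj x1 x2 h12
    have h12' : Relation.EqvGen (fun x y => ∃ r : Setoid (Fin n → ZMod 2),
        r ∈ setoidOfFinpartition '' S ∧ r x y) x1 x2 := by
      rw [hc, Setoid.sSup_eq_eqvGen] at h12
      exact h12
    clear h12
    induction h12' with
    | rel x y hxy =>
      obtain ⟨r, ⟨R, hR, rfl⟩, hrel⟩ := hxy
      obtain ⟨b, hb, hx, hy⟩ := hrel
      -- Wj is the disjoint union of the R-parts contained in it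
      have hWjU : Wj = (R.parts.filter (· ⊆ Wj)).biUnion id := by
        ext z
        simp only [mem_biUnion, mem_filter, id]
        constructor
        · intro hz
          refine ⟨R.part z, ⟨R.part_mem.mpr (mem_univ z), ?_⟩, R.mem_part (mem_univ z)⟩
          obtain ⟨c', hc', hsub⟩ := hRQ R hR (R.part_mem.mpr (mem_univ z))
          have hcW : c' = Wj :=
            Q.eq_of_mem_parts hc' hWj (hsub (R.mem_part (mem_univ z))) hz
          exact hcW ▸ hsub
        · rintro ⟨B, ⟨hB, hBW⟩, hzB⟩
          exact hBW hzB
      have hdisj : ((R.parts.filter (· ⊆ Wj)) : Set (Finset (Fin n → ZMod 2))).PairwiseDisjoint id :=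
        R.disjoint.subset (by intro t ht; exact mem_coe.mpr (mem_filter.mp ht).1)
      have hsplit : ∀ x' : Fin n → ZMod 2,
          ∑ y ∈ Wj, s ^ (hammingDist y x') =
            ∑ B ∈ R.parts.filter (· ⊆ Wj), ∑ y ∈ B, s ^ (hammingDist y x') := by
        intro x'
        conv_lhs => rw [hWjU]
        exact Finset.sum_biUnion hdisj
      rw [hsplit x, hsplit y]
      apply Finset.sum_congr rfl
      intro B hB
      exact hR.2 b hb B (mem_filter.mp hB).1 x hx y hy
    | refl x => rfl
    | symm x y _ ih => exact ih.symm
    | trans x y z _ _ ih1 ih2 => exact ih1.trans ih2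
  have hlump : Lumpable Q := by
    intro Wi hWi Wj hWj x1 hx1 x2 hx2
    have h12 : c x1 x2 := by
      have : (setoidOfFinpartition Q) x1 x2 := ⟨Wi, hWi, hx1, hx2⟩
      rwa [hQc] at this
    exact key Wj hWj x1 x2 h12
  refine ⟨Q, ⟨hQP0, hlump, fun R hRP hRL => hRQ R ⟨hRP, hRL⟩⟩, ?_⟩
  rintro Q' ⟨hQ'P, hQ'L, hmax'⟩
  exact le_antisymm (hRQ Q' ⟨hQ'P, hQ'L⟩) (hmax' Q hQP0 hlump)
end
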